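/- Let u_t(b) = (V_t − b)·1{M_t ≤ b} where each pair (V_t, M_t), t = 1,…,T, is σ-smooth on [0,1]². Let X ⊆ [0,1] be a finite grid and δ(X) = max_{p∈[0,1]} min_{x∈X} |p−x|. Then sup_{b∈[0,1]} E[Σ_{t=1}^T u_t(b)] − max_{x∈X} E[Σ_{t=1}^T u_t(x)] ≤ 3·(δ(X)/σ)·T. -/

import Mathlib

open MeasureTheory

/-- Discretization Lemma for σ-smooth adversaries. -/
theorem stmt_1 {Ω : Type*} [MeasurableSpace Ω] {P : MeasureTheory.Measure Ω}
    [IsProbabilityMeasure P]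
    (T : ℕ) (V M : ℕ → Ω → ℝ)
    (hV : ∀ t, Measurable (V t)) (hM : ∀ t, Measurable (M t))
    (hVr : ∀ t ω, V t ω ∈ Set.Icc (0:ℝ) 1) (hMr : ∀ t ω, M t ω ∈ Set.Icc (0:ℝ) 1)
    (σ : ℝ) (hσ : 0 < σ)
    (hsmooth : ∀ t ∈ Finset.range T, ∀ A : Set (ℝ × ℝ), MeasurableSet A →
      P {ω | (V t ω, M t ω) ∈ A} ≤ volume A / ENNReal.ofReal σ)
    (X : Finset ℝ) (hXne : X.Nonempty) (hX : ∀ x ∈ X, x ∈ Set.Icc (0:ℝ) 1)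
    (δ : ℝ)
    (hδ : ∀ p ∈ Set.Icc (0:ℝ) 1, ∃ x ∈ X, |p - x| ≤ δ) :
    sSup { r : ℝ | ∃ b ∈ Set.Icc (0:ℝ) 1,
        r = ∫ ω, (∑ t ∈ Finset.range T, (V t ω - b) * (if M t ω ≤ b then 1 else 0)) ∂P }
      - X.sup' hXne (fun x =>
          ∫ ω, (∑ t ∈ Finset.range T, (V t ω - x) * (if M t ω ≤ x then 1 else 0)) ∂P)
      ≤ 3 * (δ / σ) * T := by
  classical
  obtain ⟨x0, hx0X, hx0d⟩ := hδ 0 (by norm_num)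
  have hδ0 : 0 ≤ δ := le_trans (abs_nonneg _) hx0d
  have hδσ : 0 ≤ δ / σ := div_nonneg hδ0 hσ.le
  have hTpos : (0:ℝ) ≤ (T:ℝ) := Nat.cast_nonneg T
  -- measurability and integrability of single-round utilities
  have hmeas : ∀ (b : ℝ) (t : ℕ),
      Measurable (fun ω => (V t ω - b) * (if M t ω ≤ b then 1 else 0)) := by
    intro b t
    exact ((hV t).sub measurable_const).mul
      (Measurable.ite (measurableSet_le (hM t) measurable_const)
        measurable_const measurable_const)
  have hint : ∀ b ∈ Set.Icc (0:ℝ) 1, ∀ (t : ℕ),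
      Integrable (fun ω => (V t ω - b) * (if M t ω ≤ b then 1 else 0)) P := by
    intro b hb t
    refine (integrable_const (2:ℝ)).mono' (hmeas b t).aestronglyMeasurable ?_
    filter_upwards with ω
    have h1 := (hVr t ω).1; have h2 := (hVr t ω).2
    rw [Real.norm_eq_abs, abs_mul]
    have hA : |V t ω - b| ≤ 2 := by
      rw [abs_le]; constructor <;> [skip; skip] <;> cases' hb with hb1 hb2 <;> linarith
    have hB : |(if M t ω ≤ b then (1:ℝ) else 0)| ≤ 1 := by
      split <;> norm_num
    calc |V t ω - b| * |(if M t ω ≤ b then (1:ℝ) else 0)| ≤ 2 * 1 := by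
          exact mul_le_mul hA hB (abs_nonneg _) (by norm_num)
      _ = 2 := by norm_num
  -- core per-round estimate
  have core : ∀ b ∈ Set.Icc (0:ℝ) 1, ∀ x ∈ Set.Icc (0:ℝ) 1, |b - x| ≤ δ →
      ∀ t ∈ Finset.range T,
      (∫ ω, (V t ω - b) * (if M t ω ≤ b then 1 else 0) ∂P)
        - (∫ ω, (V t ω - x) * (if M t ω ≤ x then 1 else 0) ∂P) ≤ 2 * (δ / σ) := by
    intro b hb x hx hbx t ht
    -- σ ≤ 1
    have hσ1 : σ ≤ 1 := by
      have h := hsmooth t ht ((Set.Icc (0:ℝ) 1) ×ˢ (Set.Icc (0:ℝ) 1))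
        (measurableSet_Icc.prod measurableSet_Icc)
      have hall : {ω | (V t ω, M t ω) ∈ ((Set.Icc (0:ℝ) 1) ×ˢ (Set.Icc (0:ℝ) 1))} = Set.univ :=
        Set.eq_univ_iff_forall.mpr (fun ω => ⟨hVr t ω, hMr t ω⟩)
      rw [hall, measure_univ] at h
      have hv : volume ((Set.Icc (0:ℝ) 1) ×ˢ (Set.Icc (0:ℝ) 1)) = 1 := by
        rw [Measure.volume_eq_prod, Measure.prod_prod, Real.volume_Icc]
        simp
      rw [hv] at h
      have hne0 : ENNReal.ofReal σ ≠ 0 := (ENNReal.ofReal_pos.mpr hσ).ne'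
      have h2 : (1:ENNReal) * ENNReal.ofReal σ ≤ 1 :=
        (ENNReal.le_div_iff_mul_le (Or.inl hne0) (Or.inl ENNReal.ofReal_ne_top)).mp h
      rw [one_mul] at h2
      exact ENNReal.ofReal_le_one.mp h2
    set E : Set Ω := {ω | M t ω ∈ Set.Ioc (min b x) (max b x)} with hE
    have hEmeas : MeasurableSet E := (hM t) measurableSet_Ioc
    have hPE : P E ≤ ENNReal.ofReal (δ / σ) := by
      have heq : E = {ω | (V t ω, M t ω) ∈ ((Set.Icc (0:ℝ) 1) ×ˢ Set.Ioc (min b x) (max b x))} := by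
        ext ω
        simp only [hE, Set.mem_setOf_eq, Set.mem_prod]
        exact (and_iff_right (hVr t ω)).symm
      rw [heq]
      refine le_trans (hsmooth t ht _ (measurableSet_Icc.prod measurableSet_Ioc)) ?_
      have hv : volume ((Set.Icc (0:ℝ) 1) ×ˢ Set.Ioc (min b x) (max b x))
          = ENNReal.ofReal (max b x - min b x) := by
        rw [Measure.volume_eq_prod, Measure.prod_prod, Real.volume_Icc, Real.volume_Ioc]
        simp
      rw [hv, ENNReal.ofReal_div_of_pos hσ]
      have hle : max b x - min b x ≤ δ := by rw [max_sub_min_eq_abs, abs_sub_comm]; exact hbx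
      exact ENNReal.div_le_div_right (ENNReal.ofReal_le_ofReal hle) _
    have hPEr : (P E).toReal ≤ δ / σ := ENNReal.toReal_le_of_le_ofReal hδσ hPE
    -- pointwise bound
    have hpt : ∀ ω, (V t ω - b) * (if M t ω ≤ b then 1 else 0)
        - (V t ω - x) * (if M t ω ≤ x then 1 else 0) ≤ δ + E.indicator (fun _ => (1:ℝ)) ω := by
      intro ω
      have h1 := (hVr t ω).1; have h2 := (hVr t ω).2
      have hm1 := (hMr t ω).1; have hm2 := (hMr t ω).2
      have habs := abs_le.mp hbx
      have hindnn : (0:ℝ) ≤ E.indicator (fun _ => (1:ℝ)) ω := Set.indicator_nonneg (fun _ _ => zero_le_one) ω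
      by_cases hmb : M t ω ≤ b <;> by_cases hmx : M t ω ≤ x
      · simp only [if_pos hmb, if_pos hmx]; nlinarith
      · have hone : E.indicator (fun _ => (1:ℝ)) ω = 1 := by
          have : ω ∈ E := by
            simp only [hE, Set.mem_setOf_eq, Set.mem_Ioc]
            constructor
            · exact lt_of_le_of_lt (min_le_right b x) (not_le.mp hmx)
            · exact le_trans hmb (le_max_left b x)
          simp [this]
        simp only [if_pos hmb, if_neg hmx, hone]
        cases' hb with hb1 hb2
        nlinarith
      · have hone : E.indicator (fun _ => (1:ℝ)) ω = 1 := by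
          have : ω ∈ E := by
            simp only [hE, Set.mem_setOf_eq, Set.mem_Ioc]
            constructor
            · exact lt_of_le_of_lt (min_le_left b x) (not_le.mp hmb)
            · exact le_trans hmx (le_max_right b x)
          simp [this]
        simp only [if_neg hmb, if_pos hmx, hone]
        cases' hx with hx1 hx2
        nlinarith
      · simp only [if_neg hmb, if_neg hmx]; nlinarith
    -- integrate
    have hrhsint : Integrable (fun ω => δ + E.indicator (fun _ => (1:ℝ)) ω) P :=
      (integrable_const δ).add ((integrable_const (1:ℝ)).indicator hEmeas)
    have hsub := ((hint b hb t).sub (hint x hx t))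
    have hIle : (∫ ω, ((V t ω - b) * (if M t ω ≤ b then 1 else 0)
          - (V t ω - x) * (if M t ω ≤ x then 1 else 0)) ∂P)
        ≤ ∫ ω, (δ + E.indicator (fun _ => (1:ℝ)) ω) ∂P :=
      integral_mono hsub hrhsint hpt
    have hIrhs : (∫ ω, (δ + E.indicator (fun _ => (1:ℝ)) ω) ∂P) = δ + (P E).toReal := by
      rw [integral_add (integrable_const δ) ((integrable_const (1:ℝ)).indicator hEmeas),
        integral_const, integral_indicator_const (1:ℝ) hEmeas]
      simp
      rfl
    have hsplit : (∫ ω, ((V t ω - b) * (if M t ω ≤ b then 1 else 0)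
          - (V t ω - x) * (if M t ω ≤ x then 1 else 0)) ∂P)
        = (∫ ω, (V t ω - b) * (if M t ω ≤ b then 1 else 0) ∂P)
          - (∫ ω, (V t ω - x) * (if M t ω ≤ x then 1 else 0) ∂P) :=
      integral_sub (hint b hb t) (hint x hx t)
    have hδδ : δ ≤ δ / σ := by
      rw [le_div_iff₀ hσ]; nlinarith
    rw [hsplit, hIrhs] at hIle
    linarith
  -- main estimate
  have main : ∀ b ∈ Set.Icc (0:ℝ) 1,
      (∫ ω, (∑ t ∈ Finset.range T, (V t ω - b) * (if M t ω ≤ b then 1 else 0)) ∂P)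
      ≤ X.sup' hXne (fun x =>
          ∫ ω, (∑ t ∈ Finset.range T, (V t ω - x) * (if M t ω ≤ x then 1 else 0)) ∂P)
        + 3 * (δ / σ) * T := by
    intro b hb
    obtain ⟨x, hxX, hbx⟩ := hδ b hb
    have hxI := hX x hxX
    have hdiff : (∫ ω, (∑ t ∈ Finset.range T, (V t ω - b) * (if M t ω ≤ b then 1 else 0)) ∂P)
        - (∫ ω, (∑ t ∈ Finset.range T, (V t ω - x) * (if M t ω ≤ x then 1 else 0)) ∂P)
        ≤ 2 * (δ / σ) * T := by
      rw [integral_finset_sum _ (fun t _ => hint b hb t),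
        integral_finset_sum _ (fun t _ => hint x hxI t), ← Finset.sum_sub_distrib]
      calc (∑ t ∈ Finset.range T, ((∫ ω, (V t ω - b) * (if M t ω ≤ b then 1 else 0) ∂P)
              - ∫ ω, (V t ω - x) * (if M t ω ≤ x then 1 else 0) ∂P))
          ≤ ∑ _t ∈ Finset.range T, 2 * (δ / σ) :=
            Finset.sum_le_sum (fun t ht => core b hb x hxI hbx t ht)
        _ = 2 * (δ / σ) * T := by
            rw [Finset.sum_const, Finset.card_range, nsmul_eq_mul]; ring
    have hle : (∫ ω, (∑ t ∈ Finset.range T, (V t ω - x) * (if M t ω ≤ x then 1 else 0)) ∂P)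
        ≤ X.sup' hXne (fun x =>
          ∫ ω, (∑ t ∈ Finset.range T, (V t ω - x) * (if M t ω ≤ x then 1 else 0)) ∂P) :=
      Finset.le_sup' (fun x => ∫ ω,
        (∑ t ∈ Finset.range T, (V t ω - x) * (if M t ω ≤ x then 1 else 0)) ∂P) hxX
    have hnn : (0:ℝ) ≤ (δ / σ) * T := mul_nonneg hδσ hTpos
    linarith
  rw [sub_le_iff_le_add']
  refine csSup_le ⟨_, ⟨0, by norm_num, rfl⟩⟩ ?_
  rintro r ⟨b, hb, rfl⟩
  exact main b hb
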